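/- Let p > 2 and let (f_n) be a sequence in L²(ℝ^N) ∩ L^p(ℝ^N) and f ∈ L²(ℝ^N) ∩ L^p(ℝ^N) such that f_n → f in L²(ℝ^N), and suppose that for every η > 0 there exists M > 0 with sup_n ∫_{ {|f_n| ≥ M} } |f_n|^p dx ≤ η and ∫_{ {|f| ≥ M} } |f|^p dx ≤ η. Then f_n → f in L^p(ℝ^N). -/

import Mathlib

open MeasureTheory Filter Set
open scoped ENNReal NNReal

private lemma key_two {p : ℝ} (hp : 2 < p) (u v : ℝ) (h : |u| ≤ |v|) :
    |u - v| ^ p ≤ 2 ^ p * |v| ^ p := by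
  have h1 : |u - v| ≤ 2 * |v| := (abs_sub u v).trans (by linarith)
  calc |u - v| ^ p ≤ (2 * |v|) ^ p :=
        Real.rpow_le_rpow (abs_nonneg _) h1 (by linarith)
    _ = 2 ^ p * |v| ^ p := Real.mul_rpow (by norm_num) (abs_nonneg _)

private lemma ptwise {p M : ℝ} (hp : 2 < p) (hM : 0 < M) (a b : ℝ) :
    |a - b| ^ p ≤ (2 * M) ^ (p - 2) * |a - b| ^ (2:ℝ)
      + 2 ^ (p + 1) * ((if M ≤ |a| then |a| ^ p else 0)
        + (if M ≤ |b| then |b| ^ p else 0)) := by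
  have hC1 : 0 ≤ (2 * M) ^ (p - 2) * |a - b| ^ (2:ℝ) :=
    mul_nonneg (Real.rpow_nonneg (by linarith) _) (Real.rpow_nonneg (abs_nonneg _) _)
  have h2p1 : (0:ℝ) < 2 ^ (p + 1) := Real.rpow_pos_of_pos (by norm_num) _
  have h2p : (2:ℝ) ^ p ≤ 2 ^ (p + 1) := by
    rw [Real.rpow_add (by norm_num : (0:ℝ) < 2), Real.rpow_one]
    nlinarith [Real.rpow_pos_of_pos (show (0:ℝ) < 2 by norm_num) p]
  have hap : (0:ℝ) ≤ |a| ^ p := Real.rpow_nonneg (abs_nonneg _) _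
  have hbp : (0:ℝ) ≤ |b| ^ p := Real.rpow_nonneg (abs_nonneg _) _
  rcases lt_or_ge |a| M with ha | ha
  · rcases lt_or_ge |b| M with hb | hb
    · -- both small
      have h1 : |a - b| ≤ 2 * M := (abs_sub a b).trans (by linarith)
      have heq : |a - b| ^ (p - 2) * |a - b| ^ (2:ℝ) = |a - b| ^ p := by
        rw [← Real.rpow_add' (abs_nonneg _) (by intro h; linarith : p - 2 + 2 ≠ 0)]
        congr 1
        ring
      have hmain : |a - b| ^ p ≤ (2 * M) ^ (p - 2) * |a - b| ^ (2:ℝ) := by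
        rw [← heq]
        exact mul_le_mul_of_nonneg_right
          (Real.rpow_le_rpow (abs_nonneg _) h1 (by linarith))
          (Real.rpow_nonneg (abs_nonneg _) _)
      have ht : (0:ℝ) ≤ 2 ^ (p + 1) * ((if M ≤ |a| then |a| ^ p else 0)
          + (if M ≤ |b| then |b| ^ p else 0)) := by
        apply mul_nonneg h2p1.le
        apply add_nonneg <;> split_ifs <;> first | assumption | exact le_rfl
      linarith
    · -- |a| < M ≤ |b|
      rw [if_neg (not_le.2 ha), if_pos hb]
      have h1 := key_two hp a b (le_trans ha.le hb)
      nlinarith [mul_le_mul_of_nonneg_right h2p hbp]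
  · rcases lt_or_ge |b| M with hb | hb
    · -- M ≤ |a|, |b| < M
      rw [if_pos ha, if_neg (not_le.2 hb)]
      have h1 : |a - b| ^ p ≤ 2 ^ p * |a| ^ p := by
        rw [abs_sub_comm]; exact key_two hp b a (le_trans hb.le ha)
      nlinarith [mul_le_mul_of_nonneg_right h2p hap]
    · -- both large
      rw [if_pos ha, if_pos hb]
      rcases le_total |a| |b| with h | h
      · have h1 := key_two hp a b h
        nlinarith [mul_le_mul_of_nonneg_right h2p hbp, mul_nonneg h2p1.le hap]
      · have h1 : |a - b| ^ p ≤ 2 ^ p * |a| ^ p := by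
          rw [abs_sub_comm]; exact key_two hp b a h
        nlinarith [mul_le_mul_of_nonneg_right h2p hap, mul_nonneg h2p1.le hbp]

section helpers

variable {N : ℕ}

private lemma tail_bound {p M η : ℝ} (hp0 : 0 < p) (u : EuclideanSpace ℝ (Fin N) → ℝ)
    (hu : MemLp u (ENNReal.ofReal p) (volume : Measure (EuclideanSpace ℝ (Fin N))))
    (hη : ∫ x in {x | M ≤ |u x|}, |u x| ^ p ≤ η) :
    ∫⁻ x, ENNReal.ofReal (if M ≤ |u x| then |u x| ^ p else 0) ≤ ENNReal.ofReal η := by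
  set S : Set (EuclideanSpace ℝ (Fin N)) := {x | M ≤ |u x|} with hSdef
  have hmeas : AEMeasurable (fun x => |u x|) (volume : Measure (EuclideanSpace ℝ (Fin N))) :=
    continuous_abs.measurable.comp_aemeasurable hu.aestronglyMeasurable.aemeasurable
  have hS : NullMeasurableSet S volume := hmeas.nullMeasurable measurableSet_Ici
  have h1 : (fun x => ENNReal.ofReal (if M ≤ |u x| then |u x| ^ p else 0))
      = S.indicator (fun x => ENNReal.ofReal (|u x| ^ p)) := by
    ext x
    by_cases h : M ≤ |u x| <;>
      simp [hSdef, Set.indicator_apply, Set.mem_setOf_eq, h]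
  rw [h1, lintegral_indicator₀ hS]
  have hint : Integrable (fun x => |u x| ^ p) (volume.restrict S) := by
    have h2 := hu.integrable_norm_rpow
      (by simp only [ne_eq, ENNReal.ofReal_eq_zero, not_le]; linarith) ENNReal.ofReal_ne_top
    simp only [Real.norm_eq_abs, ENNReal.toReal_ofReal hp0.le] at h2
    exact h2.restrict
  rw [← ofReal_integral_eq_lintegral_ofReal hint
    (Eventually.of_forall fun x => Real.rpow_nonneg (abs_nonneg _) _)]
  exact ENNReal.ofReal_le_ofReal hη

end helpers

private lemma l2_identity {N : ℕ} (h : EuclideanSpace ℝ (Fin N) → ℝ) :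
    ∫⁻ x, ENNReal.ofReal (|h x| ^ (2:ℝ)) ∂(volume : Measure (EuclideanSpace ℝ (Fin N)))
      = (eLpNorm h 2 volume) ^ (2:ℝ) := by
  rw [eLpNorm_eq_lintegral_rpow_enorm_toReal (by norm_num) (by norm_num)]
  have h2 : ((2:ℝ≥0∞)).toReal = (2:ℝ) := by norm_num
  rw [h2, ← ENNReal.rpow_mul, one_div, inv_mul_cancel₀ (by norm_num : (2:ℝ) ≠ 0),
    ENNReal.rpow_one]
  apply lintegral_congr
  intro x
  rw [Real.enorm_eq_ofReal_abs, ENNReal.ofReal_rpow_of_nonneg (abs_nonneg _) (by norm_num)]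

private lemma lp_identity {N : ℕ} {p : ℝ} (hp0 : 0 < p) (h : EuclideanSpace ℝ (Fin N) → ℝ) :
    eLpNorm h (ENNReal.ofReal p) (volume : Measure (EuclideanSpace ℝ (Fin N)))
      = (∫⁻ x, ENNReal.ofReal (|h x| ^ p)) ^ (1/p) := by
  rw [eLpNorm_eq_lintegral_rpow_enorm_toReal
    (by simp only [ne_eq, ENNReal.ofReal_eq_zero, not_le]; linarith) ENNReal.ofReal_ne_top,
    ENNReal.toReal_ofReal hp0.le]
  congr 1
  apply lintegral_congr
  intro x
  rw [Real.enorm_eq_ofReal_abs, ENNReal.ofReal_rpow_of_nonneg (abs_nonneg _) hp0.le]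

theorem asymptotic_a_priori_Lp_convergence {N : ℕ} (p : ℝ) (hp : 2 < p)
    (f : ℕ → EuclideanSpace ℝ (Fin N) → ℝ) (g : EuclideanSpace ℝ (Fin N) → ℝ)
    (hf2 : ∀ n, MemLp (f n) 2 (volume : Measure (EuclideanSpace ℝ (Fin N))))
    (hfp : ∀ n, MemLp (f n) (ENNReal.ofReal p) (volume : Measure (EuclideanSpace ℝ (Fin N))))
    (hg2 : MemLp g 2 (volume : Measure (EuclideanSpace ℝ (Fin N))))
    (hgp : MemLp g (ENNReal.ofReal p) (volume : Measure (EuclideanSpace ℝ (Fin N))))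
    (hconv : Tendsto (fun n => eLpNorm (f n - g) 2 volume) atTop (nhds 0))
    (htails : ∀ η > 0, ∃ M > (0 : ℝ),
      (∀ n, ∫ x in {x | M ≤ |f n x|}, |f n x| ^ p ≤ η) ∧
      ∫ x in {x | M ≤ |g x|}, |g x| ^ p ≤ η) :
    Tendsto (fun n => eLpNorm (f n - g) (ENNReal.ofReal p) volume) atTop (nhds 0) := by
  have hp0 : 0 < p := by linarith
  set I : ℕ → ℝ≥0∞ := fun n => ∫⁻ x, ENNReal.ofReal (|f n x - g x| ^ p) with hI
  have main : Tendsto I atTop (nhds 0) := by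
    rw [ENNReal.tendsto_nhds_zero]
    intro ε hε
    rcases eq_or_ne ε ⊤ with rfl | hεt
    · exact Eventually.of_forall fun n => le_top
    have he : 0 < ε.toReal := ENNReal.toReal_pos hε.ne' hεt
    set e := ε.toReal with hedef
    have h2p2 : (0:ℝ) < 2 ^ (p + 2) := Real.rpow_pos_of_pos (by norm_num) _
    set η : ℝ := e / (2 * 2 ^ (p + 2)) with hηdef
    have hη : 0 < η := by positivity
    obtain ⟨M, hM, htf, htg⟩ := htails η hη
    set C1 : ℝ := (2 * M) ^ (p - 2) with hC1def
    have hC1 : 0 < C1 := Real.rpow_pos_of_pos (by linarith) _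
    set c2 : ℝ := 2 ^ (p + 1) with hc2def
    have hc2 : 0 < c2 := Real.rpow_pos_of_pos (by norm_num) _
    have hoC1 : ENNReal.ofReal C1 ≠ 0 := by
      simp only [ne_eq, ENNReal.ofReal_eq_zero, not_le]; exact hC1
    have hoe2 : ENNReal.ofReal (e/2) ≠ 0 := by
      simp only [ne_eq, ENNReal.ofReal_eq_zero, not_le]; positivity
    set δ : ℝ≥0∞ := ENNReal.ofReal (e / 2) / ENNReal.ofReal C1 with hδdef
    have hδ0 : δ ≠ 0 := (ENNReal.div_pos hoe2 ENNReal.ofReal_ne_top).ne'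
    have hδt : δ ≠ ⊤ := (ENNReal.div_lt_top ENNReal.ofReal_ne_top hoC1).ne
    have hδpos : (0:ℝ≥0∞) < δ ^ (1/(2:ℝ)) :=
      ENNReal.rpow_pos (zero_lt_iff.mpr hδ0) hδt
    have hev := (ENNReal.tendsto_nhds_zero.mp hconv) (δ ^ (1/(2:ℝ))) hδpos
    filter_upwards [hev] with n hn
    -- tail bounds
    have hT1 : ∫⁻ x, ENNReal.ofReal (if M ≤ |f n x| then |f n x| ^ p else 0)
        ≤ ENNReal.ofReal η := tail_bound hp0 (f n) (hfp n) (htf n)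
    have hT2 : ∫⁻ x, ENNReal.ofReal (if M ≤ |g x| then |g x| ^ p else 0)
        ≤ ENNReal.ofReal η := tail_bound hp0 g hgp htg
    -- measurability
    have haem : AEMeasurable (fun x => f n x - g x)
        (volume : Measure (EuclideanSpace ℝ (Fin N))) :=
      (hf2 n).aestronglyMeasurable.aemeasurable.sub hg2.aestronglyMeasurable.aemeasurable
    have hG : Measurable (fun t : ℝ => ENNReal.ofReal (|t| ^ (2:ℝ))) :=
      ENNReal.measurable_ofReal.comp
        ((Real.continuous_rpow_const (by norm_num)).measurable.comp continuous_abs.measurable)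
    have hA : AEMeasurable (fun x => ENNReal.ofReal C1 * ENNReal.ofReal (|f n x - g x| ^ (2:ℝ)))
        (volume : Measure (EuclideanSpace ℝ (Fin N))) :=
      (hG.comp_aemeasurable haem).const_mul _
    have hFt : Measurable (fun t : ℝ => ENNReal.ofReal (if M ≤ t then t ^ p else 0)) :=
      ENNReal.measurable_ofReal.comp
        (Measurable.ite measurableSet_Ici (Real.continuous_rpow_const hp0.le).measurable
          measurable_const)
    have hT1m : AEMeasurable (fun x => ENNReal.ofReal (if M ≤ |f n x| then |f n x| ^ p else 0))
        (volume : Measure (EuclideanSpace ℝ (Fin N))) :=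
      hFt.comp_aemeasurable
        (continuous_abs.measurable.comp_aemeasurable (hf2 n).aestronglyMeasurable.aemeasurable)
    have htnn : ∀ y : ℝ, (0:ℝ) ≤ (if M ≤ |y| then |y| ^ p else 0) := fun y => by
      split_ifs
      exacts [Real.rpow_nonneg (abs_nonneg _) _, le_rfl]
    -- key estimate
    have step1 : I n ≤ ∫⁻ x, (ENNReal.ofReal C1 * ENNReal.ofReal (|f n x - g x| ^ (2:ℝ))
        + ENNReal.ofReal c2 * (ENNReal.ofReal (if M ≤ |f n x| then |f n x| ^ p else 0)
          + ENNReal.ofReal (if M ≤ |g x| then |g x| ^ p else 0))) := by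
      apply lintegral_mono
      intro x
      calc ENNReal.ofReal (|f n x - g x| ^ p)
          ≤ ENNReal.ofReal (C1 * |f n x - g x| ^ (2:ℝ)
              + c2 * ((if M ≤ |f n x| then |f n x| ^ p else 0)
                + (if M ≤ |g x| then |g x| ^ p else 0))) :=
            ENNReal.ofReal_le_ofReal (ptwise hp hM (f n x) (g x))
        _ = _ := by
            rw [ENNReal.ofReal_add (mul_nonneg hC1.le (Real.rpow_nonneg (abs_nonneg _) _))
                (mul_nonneg hc2.le (add_nonneg (htnn _) (htnn _))),
              ENNReal.ofReal_mul hC1.le, ENNReal.ofReal_mul hc2.le,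
              ENNReal.ofReal_add (htnn _) (htnn _)]
    have key : I n ≤ ENNReal.ofReal C1 * (∫⁻ x, ENNReal.ofReal (|f n x - g x| ^ (2:ℝ)))
        + ENNReal.ofReal c2
          * ((∫⁻ x, ENNReal.ofReal (if M ≤ |f n x| then |f n x| ^ p else 0))
            + ∫⁻ x, ENNReal.ofReal (if M ≤ |g x| then |g x| ^ p else 0)) := by
      refine step1.trans ?_
      rw [lintegral_add_left' hA, lintegral_const_mul' _ _ ENNReal.ofReal_ne_top,
        lintegral_const_mul' _ _ ENNReal.ofReal_ne_top, lintegral_add_left' hT1m]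
    -- L² part
    have hL2 : ENNReal.ofReal C1 * (∫⁻ x, ENNReal.ofReal (|f n x - g x| ^ (2:ℝ)))
        ≤ ENNReal.ofReal (e/2) := by
      have hid := l2_identity (N := N) (f n - g)
      simp only [Pi.sub_apply] at hid
      have h1 : (∫⁻ x, ENNReal.ofReal (|f n x - g x| ^ (2:ℝ))) ≤ δ := by
        rw [hid]
        calc (eLpNorm (f n - g) 2 volume) ^ (2:ℝ)
            ≤ (δ ^ (1/(2:ℝ))) ^ (2:ℝ) := ENNReal.rpow_le_rpow hn (by norm_num)
          _ = δ := by rw [← ENNReal.rpow_mul]; norm_num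
      calc ENNReal.ofReal C1 * (∫⁻ x, ENNReal.ofReal (|f n x - g x| ^ (2:ℝ)))
          ≤ ENNReal.ofReal C1 * δ := mul_le_mul_right h1 _
        _ = ENNReal.ofReal C1 * (ENNReal.ofReal (e/2) / ENNReal.ofReal C1) := rfl
        _ ≤ ENNReal.ofReal (e/2) := ENNReal.mul_div_le
    -- tail part
    have hTail : ENNReal.ofReal c2
        * ((∫⁻ x, ENNReal.ofReal (if M ≤ |f n x| then |f n x| ^ p else 0))
          + ∫⁻ x, ENNReal.ofReal (if M ≤ |g x| then |g x| ^ p else 0))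
        ≤ ENNReal.ofReal (e/2) := by
      calc ENNReal.ofReal c2
          * ((∫⁻ x, ENNReal.ofReal (if M ≤ |f n x| then |f n x| ^ p else 0))
            + ∫⁻ x, ENNReal.ofReal (if M ≤ |g x| then |g x| ^ p else 0))
          ≤ ENNReal.ofReal c2 * (ENNReal.ofReal η + ENNReal.ofReal η) :=
            mul_le_mul_right (add_le_add hT1 hT2) _
        _ = ENNReal.ofReal (c2 * (η + η)) := by
            rw [← ENNReal.ofReal_add hη.le hη.le, ← ENNReal.ofReal_mul hc2.le]
        _ = ENNReal.ofReal (e/2) := by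
            congr 1
            have h22 : (2:ℝ) ^ (p + 2) = 2 ^ (p + 1) * 2 := by
              rw [show p + 2 = (p + 1) + 1 by ring,
                Real.rpow_add (by norm_num : (0:ℝ) < 2), Real.rpow_one]
            rw [hηdef, hc2def, h22]
            field_simp
            ring
    calc I n ≤ _ := key
      _ ≤ ENNReal.ofReal (e/2) + ENNReal.ofReal (e/2) := add_le_add hL2 hTail
      _ = ENNReal.ofReal e := by rw [← ENNReal.ofReal_add (by positivity) (by positivity)]; norm_num
      _ = ε := ENNReal.ofReal_toReal hεt
  -- conclude
  rw [ENNReal.tendsto_nhds_zero]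
  intro ε hε
  have hεp : (0:ℝ≥0∞) < ε ^ p := by
    rcases eq_or_ne ε ⊤ with rfl | hεt
    · simp [ENNReal.top_rpow_of_pos hp0]
    · exact ENNReal.rpow_pos hε hεt
  filter_upwards [(ENNReal.tendsto_nhds_zero.mp main) (ε ^ p) hεp] with n hn
  have hid := lp_identity (N := N) hp0 (f n - g)
  simp only [Pi.sub_apply] at hid
  rw [hid]
  calc (∫⁻ x, ENNReal.ofReal (|f n x - g x| ^ p)) ^ (1/p)
      ≤ (ε ^ p) ^ (1/p) := ENNReal.rpow_le_rpow hn (by positivity)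
    _ = ε := by rw [← ENNReal.rpow_mul, mul_one_div, div_self hp0.ne', ENNReal.rpow_one]
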